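/- Let Y follow the univariate zero-inflated Poisson log-normal distribution ZIPLN(π, μ, σ²). Then the quantity Q₁(Y) := E[Y²]/E[Y] − 1 is well defined (E[Y] > 0) and satisfies Q₁(Y) = exp(μ + (3/2)σ²). -/

import Mathlib

open MeasureTheory ProbabilityTheory Real

/-- The probability mass function of the univariate zero-inflated Poisson log-normal
distribution ZIPLN(π, μ, σ²):
`p(y) = (1−π)·1{y=0} + π·∫ exp(−e^{μ+z})·e^{(μ+z)y}/y! dγ(z)`,
where `γ` is the centered Gaussian measure on ℝ with variance `σ²`.
Here `pr` plays the role of the zero-inflation probability π. -/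
noncomputable def ziplnPMF (pr μ σ : ℝ) (y : ℕ) : ℝ :=
  (1 - pr) * (if y = 0 then 1 else 0) +
    pr * ∫ z, exp (-exp (μ + z)) * exp ((μ + z) * y) / (Nat.factorial y)
        ∂(gaussianReal 0 ⟨σ ^ 2, sq_nonneg σ⟩)

open scoped NNReal ENNReal

private lemma exp_tsum' (x : ℝ) : ∑' n : ℕ, x ^ n / n.factorial = Real.exp x := by
  rw [Real.exp_eq_exp_ℝ, NormedSpace.exp_eq_tsum_div]

private lemma succ_term (x : ℝ) (n : ℕ) :
    ((n : ℝ) + 1) * x ^ (n + 1) / (n + 1).factorial = x * (x ^ n / n.factorial) := by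
  have h1 : ((n + 1).factorial : ℝ) = ((n : ℝ) + 1) * n.factorial := by
    push_cast [Nat.factorial_succ]; ring
  have h2 : ((n : ℝ) + 1) ≠ 0 := by positivity
  have h3 : (n.factorial : ℝ) ≠ 0 := Nat.cast_ne_zero.mpr n.factorial_ne_zero
  rw [h1]; field_simp; ring

private lemma summable1 (x : ℝ) : Summable (fun y : ℕ => (y : ℝ) * x ^ y / y.factorial) := by
  rw [← summable_nat_add_iff 1]
  have : (fun n : ℕ => ((n + 1 : ℕ) : ℝ) * x ^ (n + 1) / (n + 1).factorial)
      = fun n : ℕ => x * (x ^ n / n.factorial) := by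
    funext n; push_cast; exact succ_term x n
  rw [this]
  exact (Real.summable_pow_div_factorial x).mul_left x

private lemma tsum1 (x : ℝ) : ∑' y : ℕ, (y : ℝ) * x ^ y / y.factorial = x * Real.exp x := by
  rw [Summable.tsum_eq_zero_add (summable1 x)]
  simp only [Nat.cast_zero, zero_mul, zero_div, zero_add]
  have : (fun n : ℕ => ((n + 1 : ℕ) : ℝ) * x ^ (n + 1) / (n + 1).factorial)
      = fun n : ℕ => x * (x ^ n / n.factorial) := by
    funext n; push_cast; exact succ_term x n
  rw [this, tsum_mul_left, exp_tsum']

private lemma succ_term2 (x : ℝ) (n : ℕ) :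
    ((n : ℝ) + 1) ^ 2 * x ^ (n + 1) / (n + 1).factorial
      = x * ((n : ℝ) * x ^ n / n.factorial) + x * (x ^ n / n.factorial) := by
  have h1 : ((n + 1).factorial : ℝ) = ((n : ℝ) + 1) * n.factorial := by
    push_cast [Nat.factorial_succ]; ring
  have h2 : ((n : ℝ) + 1) ≠ 0 := by positivity
  have h3 : (n.factorial : ℝ) ≠ 0 := Nat.cast_ne_zero.mpr n.factorial_ne_zero
  rw [h1]; field_simp; ring

private lemma summable2 (x : ℝ) : Summable (fun y : ℕ => (y : ℝ) ^ 2 * x ^ y / y.factorial) := by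
  rw [← summable_nat_add_iff 1]
  have : (fun n : ℕ => ((n + 1 : ℕ) : ℝ) ^ 2 * x ^ (n + 1) / (n + 1).factorial)
      = fun n : ℕ => x * ((n : ℝ) * x ^ n / n.factorial) + x * (x ^ n / n.factorial) := by
    funext n; push_cast; exact succ_term2 x n
  rw [this]
  exact ((summable1 x).mul_left x).add ((Real.summable_pow_div_factorial x).mul_left x)

private lemma tsum2 (x : ℝ) :
    ∑' y : ℕ, (y : ℝ) ^ 2 * x ^ y / y.factorial = (x + x ^ 2) * Real.exp x := by
  rw [Summable.tsum_eq_zero_add (summable2 x)]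
  simp only [Nat.cast_zero, zero_pow, zero_mul, zero_div, zero_add]
  have : (fun n : ℕ => ((n + 1 : ℕ) : ℝ) ^ 2 * x ^ (n + 1) / (n + 1).factorial)
      = fun n : ℕ => x * ((n : ℝ) * x ^ n / n.factorial) + x * (x ^ n / n.factorial) := by
    funext n; push_cast; exact succ_term2 x n
  rw [this, Summable.tsum_add ((summable1 x).mul_left x) ((Real.summable_pow_div_factorial x).mul_left x),
    tsum_mul_left, tsum_mul_left, tsum1, exp_tsum']
  ring

private lemma pdf_shift {v : ℝ≥0} (hv : v ≠ 0) (t z : ℝ) :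
    gaussianPDFReal 0 v z * rexp (t * z)
      = rexp ((v : ℝ) * t ^ 2 / 2) * gaussianPDFReal ((v : ℝ) * t) v z := by
  have hv' : (0 : ℝ) < v := lt_of_le_of_ne v.coe_nonneg (by exact_mod_cast hv.symm)
  have key : -(z - 0) ^ 2 / (2 * (v : ℝ)) + t * z
      = (v : ℝ) * t ^ 2 / 2 + -(z - (v : ℝ) * t) ^ 2 / (2 * (v : ℝ)) := by
    field_simp; ring
  unfold gaussianPDFReal
  rw [mul_assoc, ← Real.exp_add, key, Real.exp_add]
  ring

private lemma gaussian_exp {v : ℝ≥0} (hv : v ≠ 0) (t : ℝ) :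
    Integrable (fun z => rexp (t * z)) (gaussianReal 0 v) ∧
    ∫ z, rexp (t * z) ∂(gaussianReal 0 v) = rexp ((v : ℝ) * t ^ 2 / 2) := by
  have hd : gaussianReal 0 v
      = volume.withDensity fun x => ((gaussianPDFReal 0 v x).toNNReal : ℝ≥0∞) := by
    rw [gaussianReal_of_var_ne_zero 0 hv]; rfl
  have hmeas : Measurable fun x => (gaussianPDFReal 0 v x).toNNReal :=
    (measurable_gaussianPDFReal 0 v).real_toNNReal
  have hcoe : ∀ x, ((gaussianPDFReal 0 v x).toNNReal : ℝ) = gaussianPDFReal 0 v x :=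
    fun x => Real.coe_toNNReal _ (gaussianPDFReal_nonneg 0 v x)
  have hsmul : ∀ z, (gaussianPDFReal 0 v z).toNNReal • rexp (t * z)
      = rexp ((v : ℝ) * t ^ 2 / 2) * gaussianPDFReal ((v : ℝ) * t) v z := by
    intro z
    rw [NNReal.smul_def, smul_eq_mul, hcoe, pdf_shift hv]
  constructor
  · rw [hd, integrable_withDensity_iff_integrable_smul hmeas]
    have : (fun z => (gaussianPDFReal 0 v z).toNNReal • rexp (t * z))
        = fun z => rexp ((v : ℝ) * t ^ 2 / 2) * gaussianPDFReal ((v : ℝ) * t) v z := by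
      funext z; exact hsmul z
    rw [this]
    exact (integrable_gaussianPDFReal _ v).const_mul _
  · rw [hd, integral_withDensity_eq_integral_smul hmeas]
    simp_rw [hsmul]
    rw [integral_const_mul, integral_gaussianPDFReal_eq_one _ hv, mul_one]

/-- Swap a `tsum` over `ℕ` with a Bochner integral, for nonnegative functions. -/
private lemma tsum_integral_swap {ν : Measure ℝ} {F : ℕ → ℝ → ℝ}
    (hm : ∀ y, Measurable (F y)) (h0 : ∀ y z, 0 ≤ F y z)
    (hs : ∀ z, Summable fun y => F y z)
    (hi : Integrable (fun z => ∑' y, F y z) ν) :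
    ∑' y, ∫ z, F y z ∂ν = ∫ z, ∑' y, F y z ∂ν := by
  refine (integral_tsum (fun y => (hm y).aestronglyMeasurable) ?_).symm
  have h1 : ∀ z, (∑' y, (‖F y z‖ₑ : ℝ≥0∞)) = ENNReal.ofReal (∑' y, F y z) := by
    intro z
    rw [ENNReal.ofReal_tsum_of_nonneg (fun y => h0 y z) (hs z)]
    exact tsum_congr fun y => Real.enorm_eq_ofReal (h0 y z)
  rw [← lintegral_tsum (fun y => (hm y).enorm.aemeasurable)]
  simp_rw [h1]
  rw [← ofReal_integral_eq_lintegral_ofReal hi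
      (Filter.Eventually.of_forall fun z => tsum_nonneg fun y => h0 y z)]
  exact ENNReal.ofReal_ne_top

/-- For a ZIPLN(π, μ, σ²) random variable, the quantity `Q₁(Y) = E[Y²]/E[Y] − 1`
is well defined (`E[Y] > 0`) and equals `exp(μ + (3/2)σ²)`. -/
theorem zipln_Q1 (pr μ σ : ℝ) (hpr : pr ∈ Set.Ioc (0 : ℝ) 1) (hσ : 0 < σ) :
    0 < ∑' y : ℕ, (y : ℝ) * ziplnPMF pr μ σ y ∧
    (∑' y : ℕ, (y : ℝ) ^ 2 * ziplnPMF pr μ σ y)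
        / (∑' y : ℕ, (y : ℝ) * ziplnPMF pr μ σ y) - 1
      = exp (μ + (3 / 2) * σ ^ 2) := by
  obtain ⟨hpr0, hpr1⟩ := hpr
  set v : ℝ≥0 := ⟨σ ^ 2, sq_nonneg σ⟩ with hv_def
  have hσ2 : (0 : ℝ) < σ ^ 2 := by positivity
  have hv : v ≠ 0 := by
    intro h
    have : (v : ℝ) = 0 := by rw [h]; simp
    rw [hv_def] at this
    exact absurd this hσ2.ne'
  have hvcoe : (v : ℝ) = σ ^ 2 := rfl
  set γ := gaussianReal 0 v with hγ_def
  set g : ℕ → ℝ → ℝ :=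
    fun y z => rexp (-rexp (μ + z)) * rexp ((μ + z) * y) / (Nat.factorial y) with hg_def
  -- pointwise tsum identities
  have hpow : ∀ (z : ℝ) (y : ℕ), rexp ((μ + z) * y) = rexp (μ + z) ^ y := by
    intro z y
    rw [mul_comm, Real.exp_nat_mul]
  have hform1 : ∀ z, (fun y : ℕ => (y : ℝ) * g y z)
      = fun y : ℕ => rexp (-rexp (μ + z)) *
          ((y : ℝ) * rexp (μ + z) ^ y / (Nat.factorial y)) := by
    intro z; funext y; rw [hg_def]; simp only; rw [hpow]; ring
  have hform2 : ∀ z, (fun y : ℕ => (y : ℝ) ^ 2 * g y z)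
      = fun y : ℕ => rexp (-rexp (μ + z)) *
          ((y : ℝ) ^ 2 * rexp (μ + z) ^ y / (Nat.factorial y)) := by
    intro z; funext y; rw [hg_def]; simp only; rw [hpow]; ring
  have hsum1 : ∀ z, ∑' y : ℕ, (y : ℝ) * g y z = rexp (μ + z) := by
    intro z
    rw [hform1 z, tsum_mul_left, tsum1, Real.exp_neg]
    field_simp
  have hsum2 : ∀ z, ∑' y : ℕ, (y : ℝ) ^ 2 * g y z
      = rexp (μ + z) + rexp (2 * (μ + z)) := by
    intro z
    rw [hform2 z, tsum_mul_left, tsum2, Real.exp_neg]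
    have h2 : rexp (2 * (μ + z)) = rexp (μ + z) ^ 2 := by
      rw [sq, ← Real.exp_add]; ring_nf
    rw [h2]
    field_simp
  -- integrability
  have hint1 : Integrable (fun z => rexp (μ + z)) γ := by
    have h := ((gaussian_exp hv 1).1).const_mul (rexp μ)
    simp only [one_mul, ← Real.exp_add] at h
    exact h
  have hint2 : Integrable (fun z => rexp (2 * (μ + z))) γ := by
    have h := ((gaussian_exp hv 2).1).const_mul (rexp (2 * μ))
    have : (fun z => rexp (2 * μ) * rexp (2 * z)) = fun z => rexp (2 * (μ + z)) := by
      funext z; rw [← Real.exp_add]; ring_nf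
    rwa [this] at h
  have hval1 : ∫ z, rexp (μ + z) ∂γ = rexp (μ + σ ^ 2 / 2) := by
    have : (fun z => rexp (μ + z)) = fun z => rexp μ * rexp (1 * z) := by
      funext z; rw [← Real.exp_add]; ring_nf
    rw [this, integral_const_mul, (gaussian_exp hv 1).2, ← Real.exp_add, hvcoe]
    ring_nf
  have hval2 : ∫ z, rexp (2 * (μ + z)) ∂γ = rexp (2 * μ + 2 * σ ^ 2) := by
    have : (fun z => rexp (2 * (μ + z))) = fun z => rexp (2 * μ) * rexp (2 * z) := by
      funext z; rw [← Real.exp_add]; ring_nf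
    rw [this, integral_const_mul, (gaussian_exp hv 2).2, ← Real.exp_add, hvcoe]
    ring_nf
  -- measurability of the summands
  have hmg : ∀ y : ℕ, Measurable (g y) := by
    intro y
    rw [hg_def]
    fun_prop
  have hnng : ∀ (y : ℕ) (z : ℝ), 0 ≤ g y z := by
    intro y z
    rw [hg_def]
    positivity
  -- the two swapped sums
  have hswap1 : ∑' y : ℕ, ∫ z, (y : ℝ) * g y z ∂γ = rexp (μ + σ ^ 2 / 2) := by
    rw [tsum_integral_swap (fun y => (hmg y).const_mul _)
        (fun y z => mul_nonneg (Nat.cast_nonneg y) (hnng y z))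
        (fun z => by rw [hform1 z]
                     exact (summable1 (rexp (μ + z))).mul_left _)
        (by rw [show (fun z => ∑' y : ℕ, (y : ℝ) * g y z) = fun z => rexp (μ + z) from
              funext hsum1]
            exact hint1)]
    rw [show (fun z => ∑' y : ℕ, (y : ℝ) * g y z) = fun z => rexp (μ + z) from funext hsum1]
    exact hval1
  have hswap2 : ∑' y : ℕ, ∫ z, (y : ℝ) ^ 2 * g y z ∂γ
      = rexp (μ + σ ^ 2 / 2) + rexp (2 * μ + 2 * σ ^ 2) := by
    rw [tsum_integral_swap (fun y => (hmg y).const_mul _)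
        (fun y z => mul_nonneg (by positivity) (hnng y z))
        (fun z => by rw [hform2 z]
                     exact (summable2 (rexp (μ + z))).mul_left _)
        (by rw [show (fun z => ∑' y : ℕ, (y : ℝ) ^ 2 * g y z)
              = fun z => rexp (μ + z) + rexp (2 * (μ + z)) from funext hsum2]
            exact hint1.add hint2)]
    rw [show (fun z => ∑' y : ℕ, (y : ℝ) ^ 2 * g y z)
          = fun z => rexp (μ + z) + rexp (2 * (μ + z)) from funext hsum2]
    rw [integral_add hint1 hint2, hval1, hval2]
  -- rewrite the pmf sums
  have hpmf1 : ∀ y : ℕ, (y : ℝ) * ziplnPMF pr μ σ y = pr * ∫ z, (y : ℝ) * g y z ∂γ := by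
    intro y
    rw [integral_const_mul]
    unfold ziplnPMF
    rw [← hγ_def]
    have : (∫ z, rexp (-rexp (μ + z)) * rexp ((μ + z) * ↑y) / ↑(Nat.factorial y) ∂γ)
        = ∫ z, g y z ∂γ := by rw [hg_def]
    rw [this]
    cases y with
    | zero => simp
    | succ n => simp only [Nat.succ_ne_zero, if_false, mul_zero, zero_add]; ring
  have hpmf2 : ∀ y : ℕ, (y : ℝ) ^ 2 * ziplnPMF pr μ σ y
      = pr * ∫ z, (y : ℝ) ^ 2 * g y z ∂γ := by
    intro y
    rw [integral_const_mul]
    unfold ziplnPMF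
    rw [← hγ_def]
    have : (∫ z, rexp (-rexp (μ + z)) * rexp ((μ + z) * ↑y) / ↑(Nat.factorial y) ∂γ)
        = ∫ z, g y z ∂γ := by rw [hg_def]
    rw [this]
    cases y with
    | zero => simp
    | succ n => simp only [Nat.succ_ne_zero, if_false, mul_zero, zero_add]; ring
  have hE1 : ∑' y : ℕ, (y : ℝ) * ziplnPMF pr μ σ y = pr * rexp (μ + σ ^ 2 / 2) := by
    calc ∑' y : ℕ, (y : ℝ) * ziplnPMF pr μ σ y
        = ∑' y : ℕ, pr * ∫ z, (y : ℝ) * g y z ∂γ := tsum_congr hpmf1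
      _ = pr * ∑' y : ℕ, ∫ z, (y : ℝ) * g y z ∂γ := tsum_mul_left
      _ = pr * rexp (μ + σ ^ 2 / 2) := by rw [hswap1]
  have hE2 : ∑' y : ℕ, (y : ℝ) ^ 2 * ziplnPMF pr μ σ y
      = pr * (rexp (μ + σ ^ 2 / 2) + rexp (2 * μ + 2 * σ ^ 2)) := by
    calc ∑' y : ℕ, (y : ℝ) ^ 2 * ziplnPMF pr μ σ y
        = ∑' y : ℕ, pr * ∫ z, (y : ℝ) ^ 2 * g y z ∂γ := tsum_congr hpmf2
      _ = pr * ∑' y : ℕ, ∫ z, (y : ℝ) ^ 2 * g y z ∂γ := tsum_mul_left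
      _ = pr * (rexp (μ + σ ^ 2 / 2) + rexp (2 * μ + 2 * σ ^ 2)) := by rw [hswap2]
  constructor
  · rw [hE1]; positivity
  · rw [hE1, hE2]
    have hA : (0 : ℝ) < rexp (μ + σ ^ 2 / 2) := Real.exp_pos _
    have hkey : rexp (2 * μ + 2 * σ ^ 2)
        = rexp (μ + σ ^ 2 / 2) * rexp (μ + 3 / 2 * σ ^ 2) := by
      rw [← Real.exp_add]; ring_nf
    rw [hkey]
    field_simp
    ring
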